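/- Let X be a T₅ topological space and f : X → ℝ. Then f is the uniform limit of a sequence of B₁** functions X → ℝ if and only if for every ε > 0 the restriction of f to the set D_f^ε = {x : ω_f(x) ≥ ε} is continuous. -/

import Mathlib

open Topology ENNReal Filter Set

/-- Oscillation of `f` at `x`: inf over neighbourhoods `O ∋ x` of `sup_{ξ∈O} ρ(f x, f ξ)`. -/
noncomputable def oscAt {X Y : Type*} [TopologicalSpace X] [PseudoMetricSpace Y]
    (f : X → Y) (x : X) : ℝ≥0∞ :=
  ⨅ O ∈ 𝓝 x, ⨆ ξ ∈ O, edist (f x) (f ξ)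

/-- Oscillation at `x` of the restriction of `f` to `D` (computed in the subspace `D`). -/
noncomputable def oscWithinAt {X Y : Type*} [TopologicalSpace X] [PseudoMetricSpace Y]
    (f : X → Y) (D : Set X) (x : X) : ℝ≥0∞ :=
  ⨅ O ∈ 𝓝[D] x, ⨆ ξ ∈ O, edist (f x) (f ξ)

/-- `DEps f ε = {x : ω_f(x) ≥ ε}`. -/
noncomputable def DEps {X : Type*} [TopologicalSpace X] (f : X → ℝ) (ε : ℝ) : Set X :=
  {x | ENNReal.ofReal ε ≤ oscAt f x}

/-- Iterated ε-oscillation sets: `DIter f ε n = D_f^{n*ε}` (with `DIter f ε 0 = X`). -/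
noncomputable def DIter {X : Type*} [TopologicalSpace X] (f : X → ℝ) (ε : ℝ) : ℕ → Set X
  | 0 => Set.univ
  | n + 1 => {x ∈ DIter f ε n | ENNReal.ofReal ε ≤ oscWithinAt f (DIter f ε n) x}

/-- The class `u𝒮_n(X)`. -/
def uS {X : Type*} [TopologicalSpace X] (n : ℕ) (f : X → ℝ) : Prop :=
  ∀ ε : ℝ, 0 < ε → DIter f ε (n + 1) = ∅

/-- Iterated closed discontinuity sets `D_f^{n*0}` (with `DIter0 f 0 = X`). -/
def DIter0 {X : Type*} [TopologicalSpace X] (f : X → ℝ) : ℕ → Set X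
  | 0 => Set.univ
  | n + 1 => closure {x ∈ DIter0 f n | ¬ ContinuousWithinAt f (DIter0 f n) x}

/-- The class `𝒮_n(X)`. -/
def SClass {X : Type*} [TopologicalSpace X] (n : ℕ) (f : X → ℝ) : Prop :=
  DIter0 f (n + 1) = ∅

/-- `f` is `B₁**` : the restriction of `f` to its set of discontinuity points is continuous. -/
def B1ss {X Y : Type*} [TopologicalSpace X] [PseudoMetricSpace Y] (f : X → Y) : Prop :=
  ∀ x ∈ {x | ¬ ContinuousAt f x}, ContinuousWithinAt f {x | ¬ ContinuousAt f x} x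

section Aux

variable {X : Type*} [TopologicalSpace X]

lemma oscAt_le_of_forall {f : X → ℝ} {x : X} {O : Set X} (hO : O ∈ 𝓝 x) {c : ℝ≥0∞}
    (h : ∀ ξ ∈ O, edist (f x) (f ξ) ≤ c) : oscAt f x ≤ c :=
  le_trans (iInf₂_le O hO) (iSup₂_le h)

lemma exists_nhds_of_oscAt_lt {f : X → ℝ} {x : X} {ε : ℝ} (hε : 0 < ε)
    (h : oscAt f x < ENNReal.ofReal ε) :
    ∃ O ∈ 𝓝 x, ∀ ξ ∈ O, dist (f x) (f ξ) < ε := by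
  rw [oscAt] at h
  obtain ⟨O, hO, hlt⟩ : ∃ O ∈ 𝓝 x, (⨆ ξ ∈ O, edist (f x) (f ξ)) < ENNReal.ofReal ε := by
    simpa [iInf_lt_iff] using h
  refine ⟨O, hO, fun ξ hξ => ?_⟩
  have := lt_of_le_of_lt (le_iSup₂ (f := fun ξ _ => edist (f x) (f ξ)) ξ hξ) hlt
  rwa [edist_dist, ENNReal.ofReal_lt_ofReal_iff hε] at this

lemma closure_DEps_subset {f : X → ℝ} {ε : ℝ} (hε : 0 < ε) :
    closure (DEps f ε) ⊆ DEps f (ε / 2) := by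
  intro x hx
  show ENNReal.ofReal (ε / 2) ≤ oscAt f x
  rw [oscAt]
  refine le_iInf₂ fun O hO => ?_
  have hxV : x ∈ interior O := mem_interior_iff_mem_nhds.mpr hO
  obtain ⟨y, hyV, hyD⟩ : (interior O ∩ DEps f ε).Nonempty :=
    mem_closure_iff.mp hx _ isOpen_interior hxV
  by_cases hcase : ENNReal.ofReal (ε / 2) ≤ edist (f x) (f y)
  · exact le_trans hcase
      (le_iSup₂ (f := fun ξ _ => edist (f x) (f ξ)) y (interior_subset hyV))
  · push_neg at hcase
    have h1 : ENNReal.ofReal ε ≤ ⨆ ξ ∈ interior O, edist (f y) (f ξ) :=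
      le_trans hyD (iInf₂_le _ (isOpen_interior.mem_nhds hyV))
    have h2 : (⨆ ξ ∈ interior O, edist (f y) (f ξ)) ≤
        edist (f x) (f y) + ⨆ ξ ∈ O, edist (f x) (f ξ) := by
      refine iSup₂_le fun ξ hξ => le_trans (edist_triangle_left (f y) (f ξ) (f x)) ?_
      exact add_le_add_right
        (le_iSup₂ (f := fun ξ _ => edist (f x) (f ξ)) ξ (interior_subset hξ)) _
    have h4 : ENNReal.ofReal ε ≤ ENNReal.ofReal (ε / 2) + ⨆ ξ ∈ O, edist (f x) (f ξ) :=
      le_trans (h1.trans h2) (add_le_add_left hcase.le _)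
    have h5 := tsub_le_iff_left.mpr h4
    rwa [← ENNReal.ofReal_sub _ (by positivity), show ε - ε / 2 = ε / 2 by ring] at h5

lemma approxNonneg {Y : Type*} [TopologicalSpace Y] [NormalSpace Y] (f : Y → ℝ) {ε : ℝ}
    (hε : 0 < ε) (hf0 : ∀ x, 0 ≤ f x)
    (hosc : ∀ x, ∃ O ∈ 𝓝 x, ∀ ξ ∈ O, dist (f ξ) (f x) < ε) :
    ∃ h : Y → ℝ, Continuous h ∧ ∀ x, |h x - f x| ≤ 3 * ε := by
  -- closed sets and Urysohn functions
  have hA : ∀ k : ℕ, closure {y | f y ≤ k * ε} ⊆ {y | f y ≤ (k + 1) * ε} := by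
    intro k y hy
    obtain ⟨O, hO, hd⟩ := hosc y
    obtain ⟨ξ, hξO, hξ⟩ : (O ∩ {y | f y ≤ k * ε}).Nonempty :=
      mem_closure_iff_nhds.mp hy O hO
    have h1 : |f ξ - f y| < ε := by simpa [Real.dist_eq] using hd ξ hξO
    have h2 := abs_lt.mp h1
    simp only [mem_setOf_eq] at hξ ⊢
    linarith
  have hB : ∀ k : ℕ, closure {y | (k + 3) * ε ≤ f y} ⊆ {y | (k + 2) * ε ≤ f y} := by
    intro k y hy
    obtain ⟨O, hO, hd⟩ := hosc y
    obtain ⟨ξ, hξO, hξ⟩ : (O ∩ {y | (k + 3) * ε ≤ f y}).Nonempty :=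
      mem_closure_iff_nhds.mp hy O hO
    have h1 : |f ξ - f y| < ε := by simpa [Real.dist_eq] using hd ξ hξO
    have h2 := abs_lt.mp h1
    simp only [mem_setOf_eq] at hξ ⊢
    linarith
  have hdisj : ∀ k : ℕ, Disjoint (closure {y | f y ≤ k * ε}) (closure {y | (k + 3) * ε ≤ f y}) := by
    intro k
    refine Set.disjoint_left.mpr fun y hy hy' => ?_
    have := hA k hy
    have := hB k hy'
    simp only [mem_setOf_eq] at *
    linarith
  have H : ∀ k : ℕ, ∃ φ : C(Y, ℝ), EqOn φ 0 (closure {y | f y ≤ k * ε}) ∧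
      EqOn φ 1 (closure {y | (k + 3) * ε ≤ f y}) ∧ ∀ y, φ y ∈ Icc (0 : ℝ) 1 :=
    fun k => exists_continuous_zero_one_of_isClosed isClosed_closure isClosed_closure (hdisj k)
  choose φ hφ0 hφ1 hφ01 using H
  have zero_of : ∀ (k : ℕ) y, f y ≤ k * ε → φ k y = 0 := fun k y hy =>
    hφ0 k (subset_closure hy)
  have one_of : ∀ (k : ℕ) y, (k + 3) * ε ≤ f y → φ k y = 1 := fun k y hy =>
    hφ1 k (subset_closure hy)
  set N : Y → ℕ := fun y => ⌈f y / ε⌉₊ with hN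
  have hNle : ∀ y (k : ℕ), N y ≤ k → φ k y = 0 := by
    intro y k hk
    refine zero_of k y ?_
    have : f y / ε ≤ k := le_trans (Nat.le_ceil _) (by exact_mod_cast hk)
    calc f y = f y / ε * ε := by field_simp
    _ ≤ k * ε := by nlinarith
  set S : Y → ℝ := fun y => ∑ k ∈ Finset.range (N y), φ k y with hS
  have hSstable : ∀ y (M : ℕ), N y ≤ M → S y = ∑ k ∈ Finset.range M, φ k y := by
    intro y M hM
    exact Finset.sum_subset (Finset.range_subset_range.mpr hM)
      (fun k _ hk => hNle y k (le_of_not_gt fun h => hk (Finset.mem_range.mpr h)))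
  refine ⟨fun y => ε * S y, ?_, ?_⟩
  · rw [continuous_iff_continuousAt]
    intro x
    obtain ⟨O, hO, hd⟩ := hosc x
    set M : ℕ := ⌈(f x + ε) / ε⌉₊ with hM
    have hcongr : ∀ ξ ∈ O, ε * S ξ = ε * ∑ k ∈ Finset.range M, φ k ξ := by
      intro ξ hξ
      have h1 : |f ξ - f x| < ε := by simpa [Real.dist_eq] using hd ξ hξ
      have h2 := abs_lt.mp h1
      have hle : N ξ ≤ M := by
        have : f ξ / ε ≤ (f x + ε) / ε := by gcongr; linarith
        exact Nat.ceil_le_ceil this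
      rw [hSstable ξ M hle]
    have hMc : ContinuousAt (fun ξ => ε * ∑ k ∈ Finset.range M, φ k ξ) x :=
      (continuous_const.mul (continuous_finset_sum _ fun k _ => (φ k).continuous)).continuousAt
    exact hMc.congr (Filter.eventuallyEq_of_mem hO fun ξ hξ => (hcongr ξ hξ).symm)
  · intro x
    have hc0 : 0 ≤ f x := hf0 x
    have hup : S x ≤ (N x : ℝ) := by
      calc S x ≤ ∑ _k ∈ Finset.range (N x), (1 : ℝ) :=
            Finset.sum_le_sum fun k _ => (hφ01 k x).2
      _ = N x := by simp
    have hNx1 : (N x : ℝ) < f x / ε + 1 := Nat.ceil_lt_add_one (by positivity)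
    have hNx2 : f x / ε ≤ (N x : ℝ) := Nat.le_ceil _
    have hlow : ((N x - 3 : ℕ) : ℝ) ≤ S x := by
      have hones : ∀ k ∈ Finset.range (N x - 3), φ k x = 1 := by
        intro k hk
        have hk' := Finset.mem_range.mp hk
        have hkN : k + 4 ≤ N x := by omega
        refine one_of k x ?_
        have h1 : (k : ℝ) + 4 ≤ (N x : ℝ) := by exact_mod_cast hkN
        have h2 : (k : ℝ) + 3 < f x / ε := by linarith
        calc ((k : ℝ) + 3) * ε ≤ f x / ε * ε := by nlinarith
        _ = f x := by field_simp
      calc ((N x - 3 : ℕ) : ℝ) = ∑ k ∈ Finset.range (N x - 3), φ k x := by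
            rw [Finset.sum_congr rfl hones]; simp
      _ ≤ S x := Finset.sum_le_sum_of_subset_of_nonneg
            (Finset.range_subset_range.mpr (Nat.sub_le _ _)) fun k _ _ => (hφ01 k x).1
    have hcast : (N x : ℝ) - 3 ≤ ((N x - 3 : ℕ) : ℝ) := by
      have h3 : N x ≤ (N x - 3) + 3 := by omega
      have := (Nat.cast_le (α := ℝ)).mpr h3
      push_cast at this
      linarith
    rw [abs_le]
    have heq : ε * (f x / ε) = f x := by field_simp
    constructor
    · have h6 : f x / ε - 3 ≤ S x := by linarith
      have h7 := mul_le_mul_of_nonneg_left h6 hε.le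
      simp only []
      nlinarith
    · have h6 : S x ≤ f x / ε + 1 := by linarith
      have h7 := mul_le_mul_of_nonneg_left h6 hε.le
      simp only []
      nlinarith

lemma approxSigned {Y : Type*} [TopologicalSpace Y] [NormalSpace Y] (f : Y → ℝ) {ε : ℝ}
    (hε : 0 < ε) (hosc : ∀ x, ∃ O ∈ 𝓝 x, ∀ ξ ∈ O, dist (f ξ) (f x) < ε) :
    ∃ h : Y → ℝ, Continuous h ∧ ∀ x, |h x - f x| ≤ 6 * ε := by
  obtain ⟨h1, hc1, hb1⟩ := approxNonneg (fun x => max (f x) 0) hε (fun x => le_max_right _ _)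
    (fun x => by
      obtain ⟨O, hO, hd⟩ := hosc x
      refine ⟨O, hO, fun ξ hξ => lt_of_le_of_lt ?_ (hd ξ hξ)⟩
      simp only [Real.dist_eq]
      exact abs_max_sub_max_le_abs _ _ _)
  obtain ⟨h2, hc2, hb2⟩ := approxNonneg (fun x => max (-f x) 0) hε (fun x => le_max_right _ _)
    (fun x => by
      obtain ⟨O, hO, hd⟩ := hosc x
      refine ⟨O, hO, fun ξ hξ => lt_of_le_of_lt ?_ (hd ξ hξ)⟩
      simp only [Real.dist_eq]
      calc |max (-f ξ) 0 - max (-f x) 0| ≤ |(-f ξ) - (-f x)| := abs_max_sub_max_le_abs _ _ _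
      _ = |f ξ - f x| := by rw [← abs_neg]; ring_nf)
  refine ⟨fun x => h1 x - h2 x, hc1.sub hc2, fun x => ?_⟩
  have key : max (f x) 0 - max (-f x) 0 = f x := by
    rcases le_total 0 (f x) with h | h
    · rw [max_eq_left h, max_eq_right (neg_nonpos.mpr h)]; ring
    · rw [max_eq_right h, max_eq_left (neg_nonneg.mpr h)]; ring
  have e1 := abs_le.mp (hb1 x)
  have e2 := abs_le.mp (hb2 x)
  rw [abs_le]
  constructor <;> simp only [] at * <;> [linarith; linarith]

lemma exists_B1ss_approx {X : Type*} [TopologicalSpace X] [T5Space X] (f : X → ℝ) {ε : ℝ}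
    (hε : 0 < ε)
    (hcont : ∀ x ∈ DEps f (ε / 2), ContinuousWithinAt f (DEps f (ε / 2)) x) :
    ∃ g : X → ℝ, B1ss g ∧ ∀ x, |g x - f x| ≤ 6 * ε := by
  classical
  set T : Set X := closure (DEps f ε) with hT
  have hTsub : T ⊆ DEps f (ε / 2) := closure_DEps_subset hε
  have hoscU : ∀ u : (Tᶜ : Set X), ∃ O' ∈ 𝓝 u,
      ∀ ξ ∈ O', dist (f (ξ : (Tᶜ : Set X))) (f (u : (Tᶜ : Set X))) < ε := by
    intro u
    have hx : (u : X) ∉ DEps f ε := fun h => u.2 (subset_closure h)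
    have hlt : oscAt f (u : X) < ENNReal.ofReal ε := not_le.mp hx
    obtain ⟨O, hO, hd⟩ := exists_nhds_of_oscAt_lt hε hlt
    refine ⟨Subtype.val ⁻¹' O, continuous_subtype_val.continuousAt.preimage_mem_nhds hO,
      fun ξ hξ => ?_⟩
    simpa [dist_comm] using hd ξ.1 hξ
  obtain ⟨h, hil, hb⟩ := approxSigned (Y := (Tᶜ : Set X)) (fun u => f u) hε hoscU
  set g : X → ℝ := fun x => if hx : x ∈ T then f x else h ⟨x, hx⟩ with hg
  have hres : (Tᶜ : Set X).restrict g = h := by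
    funext u
    have hu : (u : X) ∉ T := u.2
    exact dif_neg hu
  have hopen : IsOpen (Tᶜ : Set X) := isClosed_closure.isOpen_compl
  have hgU : ∀ x, x ∉ T → ContinuousAt g x := by
    have hco : ContinuousOn g Tᶜ := continuousOn_iff_continuous_restrict.mpr
      (by rw [show (Tᶜ : Set X).domRestrict g = h from hres]; exact hil)
    exact fun x hx => hco.continuousAt (hopen.mem_nhds hx)
  have hgT : ∀ x ∈ T, ContinuousWithinAt g T x := by
    intro x hxT
    have h1 : ContinuousWithinAt f T x := (hcont x (hTsub hxT)).mono hTsub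
    refine h1.congr (fun y hy => ?_) ?_
    · show (if h : y ∈ T then f y else _) = f y
      exact dif_pos hy
    · show (if h : x ∈ T then f x else _) = f x
      exact dif_pos hxT
  refine ⟨g, ?_, ?_⟩
  · intro x hx
    have hxT : x ∈ T := by_contra fun hc => hx (hgU x hc)
    exact (hgT x hxT).mono fun y hy => by_contra fun hc => hy (hgU y hc)
  · intro x
    by_cases hx : x ∈ T
    · have : g x = f x := dif_pos hx
      rw [this, sub_self, abs_zero]
      positivity
    · simpa only [hg, dif_neg hx] using hb ⟨x, hx⟩

lemma not_continuousAt_of_close {X : Type*} [TopologicalSpace X] {f F : X → ℝ} {ε : ℝ}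
    (hε : 0 < ε) (hn : ∀ y, dist (f y) (F y) < ε / 4) {y : X} (hy : y ∈ DEps f ε) :
    ¬ ContinuousAt F y := by
  intro hc
  have hO : ∀ᶠ ξ in 𝓝 y, dist (F ξ) (F y) < ε / 4 :=
    Metric.tendsto_nhds.mp hc (ε / 4) (by positivity)
  have hle : oscAt f y ≤ ENNReal.ofReal (3 * (ε / 4)) := by
    refine oscAt_le_of_forall hO fun ξ hξ => ?_
    rw [edist_dist]
    apply ENNReal.ofReal_le_ofReal
    have t1 := dist_triangle4 (f y) (F y) (F ξ) (f ξ)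
    have t2 := hn y
    have t3 : dist (F y) (F ξ) < ε / 4 := by rw [dist_comm]; exact hξ
    have t4 : dist (F ξ) (f ξ) < ε / 4 := by rw [dist_comm]; exact hn ξ
    linarith
  have hfin := le_trans hy hle
  rw [ENNReal.ofReal_le_ofReal_iff (by positivity)] at hfin
  linarith


end Aux

theorem stmt_6 {X : Type*} [TopologicalSpace X] [T5Space X] (f : X → ℝ) :
    (∃ F : ℕ → X → ℝ, (∀ n, B1ss (F n)) ∧ TendstoUniformly F f atTop) ↔
      (∀ ε : ℝ, 0 < ε → ∀ x ∈ DEps f ε, ContinuousWithinAt f (DEps f ε) x) := by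
  constructor
  · rintro ⟨F, hF, hU⟩ ε hε x hx
    have hUn : TendstoUniformlyOn F f atTop (DEps f ε) := hU.tendstoUniformlyOn
    have hcl : ∀ᶠ n in atTop, ∀ y, dist (f y) (F n y) < ε / 4 :=
      Metric.tendstoUniformly_iff.mp hU (ε / 4) (by positivity)
    have hcont : ∀ᶠ n in atTop, ContinuousOn (F n) (DEps f ε) := by
      filter_upwards [hcl] with n hn
      have hsub : DEps f ε ⊆ {z | ¬ ContinuousAt (F n) z} := fun z hz =>
        not_continuousAt_of_close hε hn hz
      exact fun y hy => (hF n y (hsub hy)).mono hsub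
    exact hUn.continuousOn hcont.frequently x hx
  · intro hrhs
    have H : ∀ n : ℕ, ∃ g : X → ℝ, B1ss g ∧ ∀ x, |g x - f x| ≤ 6 * (1 / ((n : ℝ) + 1)) := by
      intro n
      exact exists_B1ss_approx f (by positivity) (hrhs (1 / ((n : ℝ) + 1) / 2) (by positivity))
    choose F hB hFb using H
    refine ⟨F, hB, ?_⟩
    rw [Metric.tendstoUniformly_iff]
    intro δ hδ
    have hev : ∀ᶠ n : ℕ in atTop, 6 * (1 / ((n : ℝ) + 1)) < δ := by
      have h2 : Tendsto (fun n : ℕ => 6 * (1 / ((n : ℝ) + 1))) atTop (𝓝 (6 * 0)) :=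
        (tendsto_one_div_add_atTop_nhds_zero_nat).const_mul 6
      rw [mul_zero] at h2
      exact h2.eventually_lt_const hδ
    filter_upwards [hev] with n hn x
    have := hFb n x
    rw [Real.dist_eq, abs_sub_comm]
    linarith [abs_le.mp this]
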